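/- A graph G is 2-γ'_SMB-critical if and only if G is isomorphic to G_n' for some n ≥ 1. -/

import Mathlib

/-!
Maker–Breaker domination game.  The players Dominator and Staller alternately select
previously unselected vertices of a graph `G`.  Dominator wins if at some point his selected
vertices form a dominating set of `G`; Staller wins if she selects all vertices of the closed
neighbourhood of some vertex.  Below, `D` always denotes the set of vertices selected by
Dominator so far and `S` the set selected by Staller.
-/

namespace MBD

variable {V : Type*}

/-- `D` is a dominating set of `G`. -/
def IsDomSet (G : SimpleGraph V) (D : Set V) : Prop :=
  ∀ v, v ∈ D ∨ ∃ u ∈ D, G.Adj u v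

/-- Dominator is to move.  `DWin G k D S` says that Dominator has a strategy guaranteeing
that his selected set becomes a dominating set of `G` after at most `k` further moves of his
(the game ends when all vertices have been selected). -/
def DWin (G : SimpleGraph V) : ℕ → Set V → Set V → Prop
  | 0, D, _ => IsDomSet G D
  | (k+1), D, S => IsDomSet G D ∨
      ∃ v ∉ D ∪ S,
        (IsDomSet G (insert v D) ∨
          ((∃ w, w ∉ insert v D ∪ S) ∧
            ∀ w ∉ insert v D ∪ S, DWin G k (insert v D) (insert w S)))

/-- Staller is to move, and Dominator can win using at most `k` further moves of his. -/
def DWinS (G : SimpleGraph V) (k : ℕ) (D S : Set V) : Prop :=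
  IsDomSet G D ∨
    ((∃ w, w ∉ D ∪ S) ∧ ∀ w ∉ D ∪ S, DWin G k D (insert w S))

/-- The Maker–Breaker domination number `γ_MB` of `G`: the least `k` such that Dominator,
moving first (D-game), can win within at most `k` of his moves; `∞` if he cannot win. -/
noncomputable def gammaMB (G : SimpleGraph V) : ℕ∞ :=
  sInf (Nat.cast '' {k : ℕ | DWin G k ∅ ∅})

/-- The Maker–Breaker domination number `γ'_MB` of `G`: the least `k` such that Dominator
can win within at most `k` of his moves in the S-game (Staller moves first); `∞` if he
cannot win. -/
noncomputable def gammaMB' (G : SimpleGraph V) : ℕ∞ :=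
  sInf (Nat.cast '' {k : ℕ | DWinS G k ∅ ∅})

/-- Staller has won: she has selected all vertices of the closed neighbourhood `N[v]`
of some vertex `v`. -/
def IsStallerWin (G : SimpleGraph V) (S : Set V) : Prop :=
  ∃ v, v ∈ S ∧ ∀ u, G.Adj v u → u ∈ S

/-- Staller is to move.  `SWin G k D S` says Staller has a strategy to win using at most `k`
further moves of hers. -/
def SWin (G : SimpleGraph V) : ℕ → Set V → Set V → Prop
  | 0, _, S => IsStallerWin G S
  | (k+1), D, S => IsStallerWin G S ∨
      ∃ v ∉ D ∪ S,
        (IsStallerWin G (insert v S) ∨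
          ((∃ w, w ∉ D ∪ insert v S) ∧
            ∀ w ∉ D ∪ insert v S, SWin G k (insert w D) (insert v S)))

/-- Dominator is to move, and Staller can win within at most `k` further moves of hers. -/
def SWinD (G : SimpleGraph V) (k : ℕ) (D S : Set V) : Prop :=
  IsStallerWin G S ∨
    ((∃ w, w ∉ D ∪ S) ∧ ∀ w ∉ D ∪ S, SWin G k (insert w D) S)

/-- The Staller-Maker–Breaker domination number `γ_SMB` of `G`: the least `k` such that
Staller can win within at most `k` of her moves in the D-game (Dominator starts);
`∞` if she cannot win. -/
noncomputable def gammaSMB (G : SimpleGraph V) : ℕ∞ :=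
  sInf (Nat.cast '' {k : ℕ | SWinD G k ∅ ∅})

/-- The Staller-Maker–Breaker domination number `γ'_SMB` of `G`: the least `k` such that
Staller can win within at most `k` of her moves in the S-game (Staller starts);
`∞` if she cannot win. -/
noncomputable def gammaSMB' (G : SimpleGraph V) : ℕ∞ :=
  sInf (Nat.cast '' {k : ℕ | SWin G k ∅ ∅})

end MBD

open MBD

/-- The graph `G_n'`: the complete graph `K_n` (on `Fin n`, whose vertex `0` gets the pendants)
with exactly two pendant vertices attached to the single vertex `0`. -/
def GnPrime (n : ℕ) : SimpleGraph (Fin n ⊕ Fin 2) :=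
  SimpleGraph.fromRel (fun a b =>
    match a, b with
    | Sum.inl _, Sum.inl _ => True
    | Sum.inl i, Sum.inr _ => i.val = 0
    | _, _ => False)

section Game

variable {V : Type*} {G : SimpleGraph V}

/-- Two pendant vertices attached to a common vertex. -/
def TwoLeaves (G : SimpleGraph V) : Prop :=
  ∃ v p₁ p₂, p₁ ≠ p₂ ∧ G.Adj v p₁ ∧ G.Adj v p₂ ∧
    (∀ u, G.Adj p₁ u → u = v) ∧ (∀ u, G.Adj p₂ u → u = v)

lemma not_isStallerWin_empty : ¬ IsStallerWin G (∅ : Set V) := by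
  rintro ⟨z, hz, -⟩; exact hz

lemma isStallerWin_singleton {v : V} :
    IsStallerWin G {v} ↔ ∀ u, ¬ G.Adj v u := by
  constructor
  · rintro ⟨z, hz, h⟩ u hu
    rcases Set.mem_singleton_iff.mp hz with rfl
    rcases Set.mem_singleton_iff.mp (h u hu) with rfl
    exact G.irrefl hu
  · intro h
    exact ⟨v, rfl, fun u hu => absurd hu (h u)⟩

lemma swin_succ_of_swin : ∀ (k : ℕ) (D S : Set V), SWin G k D S → SWin G (k+1) D S := by
  intro k
  induction k with
  | zero =>
    intro D S h
    exact Or.inl h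
  | succ k ih =>
    intro D S h
    simp only [SWin] at h ⊢
    rcases h with h | ⟨v, hv, h⟩
    · exact Or.inl h
    · refine Or.inr ⟨v, hv, ?_⟩
      rcases h with h | ⟨hex, hall⟩
      · exact Or.inl h
      · exact Or.inr ⟨hex, fun w hw => ih _ _ (hall w hw)⟩

lemma swin_mono {j k : ℕ} (h : j ≤ k) {D S : Set V} (hs : SWin G j D S) :
    SWin G k D S := by
  induction h with
  | refl => exact hs
  | step _ ih => exact swin_succ_of_swin _ _ _ (by exact ih)

lemma swin_one_iff : SWin G 1 ∅ ∅ ↔ ∃ v, ∀ u, ¬ G.Adj v u := by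
  simp only [SWin]
  constructor
  · rintro (h | ⟨v, -, h⟩)
    · exact absurd h not_isStallerWin_empty
    · rcases h with h | ⟨⟨w, hw⟩, hall⟩
      · rw [insert_empty_eq] at h
        exact ⟨v, isStallerWin_singleton.mp h⟩
      · have := hall w hw
        rw [insert_empty_eq] at this
        exact ⟨v, isStallerWin_singleton.mp this⟩
  · rintro ⟨v, hv⟩
    refine Or.inr ⟨v, by simp, Or.inl ?_⟩
    rw [insert_empty_eq]
    exact isStallerWin_singleton.mpr hv

end Game
section Game2

variable {V : Type*} {G : SimpleGraph V}

lemma isStallerWin_pair {y v : V} (hne : y ≠ v) :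
    IsStallerWin G (insert y {v}) ↔
      ((∀ u, G.Adj y u → u = v) ∨ (∀ u, G.Adj v u → u = y)) := by
  constructor
  · rintro ⟨z, hz, h⟩
    rcases Set.mem_insert_iff.mp hz with rfl | hz
    · left; intro u hu
      rcases Set.mem_insert_iff.mp (h u hu) with rfl | hu'
      · exact absurd hu (G.irrefl)
      · exact Set.mem_singleton_iff.mp hu'
    · rcases Set.mem_singleton_iff.mp hz with rfl
      right; intro u hu
      rcases Set.mem_insert_iff.mp (h u hu) with rfl | hu'
      · rfl
      · rcases Set.mem_singleton_iff.mp hu' with rfl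
        exact absurd hu (G.irrefl)
  · rintro (h | h)
    · exact ⟨y, Set.mem_insert _ _, fun u hu =>
        Set.mem_insert_iff.mpr (Or.inr (Set.mem_singleton_iff.mpr (h u hu)))⟩
    · exact ⟨v, Set.mem_insert_iff.mpr (Or.inr rfl), fun u hu =>
        Set.mem_insert_iff.mpr (Or.inl (h u hu))⟩

lemma swin_two_iff :
    SWin G 2 ∅ ∅ ↔ (∃ v, ∀ u, ¬ G.Adj v u) ∨ TwoLeaves G := by
  constructor
  · intro h
    by_cases hiso : ∃ v, ∀ u, ¬ G.Adj v u
    · exact Or.inl hiso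
    push_neg at hiso
    right
    simp only [SWin] at h
    rcases h with h | ⟨v, -, h⟩
    · exact absurd h not_isStallerWin_empty
    rcases h with h | ⟨⟨w₀, hw₀⟩, hall⟩
    · exfalso
      rw [insert_empty_eq] at h
      obtain ⟨u, hu⟩ := hiso v
      exact (isStallerWin_singleton.mp h) u hu
    have key : ∀ w, w ≠ v → ∃ y, y ≠ w ∧ y ≠ v ∧
        ((G.Adj y v ∧ ∀ u, G.Adj y u → u = v) ∨ (G.Adj v y ∧ ∀ u, G.Adj v u → u = y)) := by
      intro w hw
      have h1 := hall w (by simp [hw])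
      rcases h1 with h1 | ⟨y, hy, h1⟩
      · exfalso
        rw [insert_empty_eq] at h1
        obtain ⟨u, hu⟩ := hiso v
        exact (isStallerWin_singleton.mp h1) u hu
      · have hyw : y ≠ w := by intro e; apply hy; simp [e]
        have hyv : y ≠ v := by intro e; apply hy; simp [e]
        have hsw : IsStallerWin G (insert y (insert v ∅)) := by
          rcases h1 with h1 | ⟨⟨z, hz⟩, h1⟩
          · exact h1
          · exact h1 z hz
        rw [insert_empty_eq] at hsw
        rcases (isStallerWin_pair hyv).mp hsw with hl | hr
        · obtain ⟨u, hu⟩ := hiso y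
          exact ⟨y, hyw, hyv, Or.inl ⟨(hl u hu) ▸ hu, hl⟩⟩
        · obtain ⟨u, hu⟩ := hiso v
          exact ⟨y, hyw, hyv, Or.inr ⟨(hr u hu) ▸ hu, hr⟩⟩
    have hw₀v : w₀ ≠ v := by intro e; apply hw₀; simp [e]
    obtain ⟨y₁, hy₁w, hy₁v, hc1⟩ := key w₀ hw₀v
    have hleaf1 : G.Adj y₁ v ∧ ∀ u, G.Adj y₁ u → u = v := by
      rcases hc1 with h1 | ⟨hadj, huniq⟩
      · exact h1
      · exfalso
        obtain ⟨y₂, hy₂y₁, hy₂v, hc2⟩ := key y₁ hy₁v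
        rcases hc2 with ⟨hadj2, -⟩ | ⟨hadj2, -⟩
        · exact hy₂y₁ (huniq y₂ hadj2.symm)
        · exact hy₂y₁ (huniq y₂ hadj2)
    obtain ⟨hadj1, huniq1⟩ := hleaf1
    obtain ⟨y₂, hy₂y₁, hy₂v, hc2⟩ := key y₁ hy₁v
    rcases hc2 with ⟨hadj2, huniq2⟩ | ⟨hadj2, huniq2⟩
    · exact ⟨v, y₁, y₂, fun e => hy₂y₁ e.symm, hadj1.symm, hadj2.symm, huniq1, huniq2⟩
    · exact absurd (huniq2 y₁ hadj1.symm) (fun e => hy₂y₁ e.symm)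
  · rintro (⟨v, hv⟩ | ⟨v, p₁, p₂, hne, h1, h2, u1, u2⟩)
    · simp only [SWin]
      exact Or.inr ⟨v, by simp, Or.inl (by
        rw [insert_empty_eq]; exact isStallerWin_singleton.mpr hv)⟩
    · simp only [SWin]
      refine Or.inr ⟨v, by simp, Or.inr ⟨⟨p₁, by simp [h1.ne']⟩, ?_⟩⟩
      intro w hw
      by_cases hwp : w = p₁
      · have hp2w : p₂ ≠ w := by rw [hwp]; exact hne.symm
        refine Or.inr ⟨p₂, by
          simp only [Set.mem_union, Set.mem_insert_iff, Set.mem_empty_iff_false, or_false]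
          push_neg; exact ⟨hp2w, h2.ne'⟩, Or.inl ?_⟩
        rw [insert_empty_eq]
        exact (isStallerWin_pair h2.ne').mpr (Or.inl u2)
      · refine Or.inr ⟨p₁, by
          simp only [Set.mem_union, Set.mem_insert_iff, Set.mem_empty_iff_false, or_false]
          push_neg; exact ⟨fun e => hwp e.symm, h1.ne'⟩, Or.inl ?_⟩
        rw [insert_empty_eq]
        exact (isStallerWin_pair h1.ne').mpr (Or.inl u1)

end Game2
section Gamma

variable {V : Type*} {G : SimpleGraph V}

lemma gammaSMB'_eq_two :
    gammaSMB' G = 2 ↔ (¬ SWin G 1 ∅ ∅) ∧ SWin G 2 ∅ ∅ := by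
  constructor
  · intro h
    have h1 : ¬ SWin G 1 ∅ ∅ := by
      intro h1
      have hle : gammaSMB' G ≤ ((1:ℕ):ℕ∞) := sInf_le ⟨1, h1, rfl⟩
      rw [h] at hle
      norm_num at hle
    refine ⟨h1, ?_⟩
    by_contra h2
    have h3 : ((3:ℕ):ℕ∞) ≤ gammaSMB' G := by
      apply le_sInf
      rintro x ⟨k, hk, rfl⟩
      have hk3 : 3 ≤ k := by
        by_contra hlt
        exact h2 (swin_mono (by omega) hk)
      exact_mod_cast hk3
    rw [h] at h3
    norm_num at h3
  · rintro ⟨h1, h2⟩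
    apply le_antisymm
    · have hle : gammaSMB' G ≤ ((2:ℕ):ℕ∞) := sInf_le ⟨2, h2, rfl⟩
      exact le_trans hle (by norm_num)
    · apply le_sInf
      rintro x ⟨k, hk, rfl⟩
      have hk2 : 2 ≤ k := by
        by_contra hlt
        exact h1 (swin_mono (by omega) hk)
      exact_mod_cast hk2

lemma two_lt_gammaSMB' :
    2 < gammaSMB' G ↔ ¬ SWin G 2 ∅ ∅ := by
  constructor
  · intro h h2
    have hle : gammaSMB' G ≤ ((2:ℕ):ℕ∞) := sInf_le ⟨2, h2, rfl⟩
    have : (2:ℕ∞) < ((2:ℕ):ℕ∞) := lt_of_lt_of_le h hle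
    norm_num at this
  · intro h2
    have h3 : ((3:ℕ):ℕ∞) ≤ gammaSMB' G := by
      apply le_sInf
      rintro x ⟨k, hk, rfl⟩
      have hk3 : 3 ≤ k := by
        by_contra hlt
        exact h2 (swin_mono (by omega) hk)
      exact_mod_cast hk3
    exact lt_of_lt_of_le (by norm_num) h3

end Gamma
section Gn

variable {n : ℕ}

lemma fin2_cases (j : Fin 2) : j = 0 ∨ j = 1 := by
  fin_cases j
  · exact Or.inl rfl
  · exact Or.inr rfl

lemma gnPrime_adj_inl_inl {i j : Fin n} :
    (GnPrime n).Adj (Sum.inl i) (Sum.inl j) ↔ i ≠ j := by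
  simp [GnPrime, SimpleGraph.fromRel_adj]

lemma gnPrime_adj_inl_inr {i : Fin n} {j : Fin 2} :
    (GnPrime n).Adj (Sum.inl i) (Sum.inr j) ↔ i.val = 0 := by
  simp [GnPrime, SimpleGraph.fromRel_adj]

lemma gnPrime_adj_inr_inr {j j' : Fin 2} :
    ¬ (GnPrime n).Adj (Sum.inr j) (Sum.inr j' : Fin n ⊕ Fin 2) := by
  simp [GnPrime, SimpleGraph.fromRel_adj]

lemma gnPrime_dominating (hn : 0 < n) (x : Fin n ⊕ Fin 2) (hx : x ≠ Sum.inl ⟨0, hn⟩) :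
    (GnPrime n).Adj (Sum.inl ⟨0, hn⟩) x := by
  match x with
  | Sum.inl i =>
    rw [gnPrime_adj_inl_inl]
    intro h
    exact hx (by rw [h])
  | Sum.inr j =>
    rw [gnPrime_adj_inl_inr]

lemma gnPrime_no_iso (hn : 0 < n) : ¬ ∃ x, ∀ y, ¬ (GnPrime n).Adj x y := by
  rintro ⟨x, hx⟩
  by_cases h : x = Sum.inl ⟨0, hn⟩
  · subst h
    exact hx (Sum.inr 0) (by rw [gnPrime_adj_inl_inr])
  · exact hx _ (gnPrime_dominating hn x h).symm

lemma gnPrime_leaf (hn : 0 < n) (j : Fin 2) (x : Fin n ⊕ Fin 2) :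
    (GnPrime n).Adj (Sum.inr j) x → x = Sum.inl ⟨0, hn⟩ := by
  intro hx
  match x with
  | Sum.inl i =>
    have : i.val = 0 := gnPrime_adj_inl_inr.mp hx.symm
    congr 1
    exact Fin.ext this
  | Sum.inr j' => exact absurd hx (gnPrime_adj_inr_inr)

lemma gnPrime_twoLeaves (hn : 0 < n) : TwoLeaves (GnPrime n) := by
  refine ⟨Sum.inl ⟨0, hn⟩, Sum.inr 0, Sum.inr 1, by simp, ?_, ?_,
    gnPrime_leaf hn 0, gnPrime_leaf hn 1⟩
  · rw [gnPrime_adj_inl_inr]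
  · rw [gnPrime_adj_inl_inr]

lemma sup_edge_adj {V : Type*} {G : SimpleGraph V} {u w a b : V} :
    (G ⊔ SimpleGraph.fromEdgeSet {s(u,w)}).Adj a b ↔
      G.Adj a b ∨ (s(a,b) = s(u,w) ∧ a ≠ b) := by
  simp [SimpleGraph.fromEdgeSet_adj]

lemma gnPrime_crit (hn : 0 < n) (u w : Fin n ⊕ Fin 2) (huw : u ≠ w)
    (hnadj : ¬ (GnPrime n).Adj u w) :
    ¬ TwoLeaves (GnPrime n ⊔ SimpleGraph.fromEdgeSet {s(u,w)}) := by
  rintro ⟨v', p₁, p₂, hne, ha1, ha2, hu1, hu2⟩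
  have hle : ∀ a b : Fin n ⊕ Fin 2, (GnPrime n).Adj a b →
      (GnPrime n ⊔ SimpleGraph.fromEdgeSet {s(u,w)}).Adj a b :=
    fun a b h => sup_edge_adj.mpr (Or.inl h)
  -- u, w are not the centre
  have huz : u ≠ Sum.inl ⟨0, hn⟩ := by
    rintro rfl
    exact hnadj (gnPrime_dominating hn w (Ne.symm huw))
  have hwz : w ≠ Sum.inl ⟨0, hn⟩ := by
    rintro rfl
    exact hnadj (gnPrime_dominating hn u huw).symm
  -- leaves are not the centre
  have hpz : ∀ p : Fin n ⊕ Fin 2,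
      (∀ x, (GnPrime n ⊔ SimpleGraph.fromEdgeSet {s(u,w)}).Adj p x → x = v') →
      p ≠ Sum.inl ⟨0, hn⟩ := by
    intro p hp hpz0
    subst hpz0
    have e0 : (Sum.inr 0 : Fin n ⊕ Fin 2) = v' :=
      hp _ (hle _ _ (by rw [gnPrime_adj_inl_inr]))
    have e1 : (Sum.inr 1 : Fin n ⊕ Fin 2) = v' :=
      hp _ (hle _ _ (by rw [gnPrime_adj_inl_inr]))
    rw [← e1] at e0
    simp at e0
  have hz1 : p₁ ≠ Sum.inl ⟨0, hn⟩ := hpz p₁ hu1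
  have hz2 : p₂ ≠ Sum.inl ⟨0, hn⟩ := hpz p₂ hu2
  -- the common support is the centre
  have hveq : v' = Sum.inl ⟨0, hn⟩ :=
    (hu1 _ (hle _ _ (gnPrime_dominating hn p₁ hz1).symm)).symm
  -- leaves are not endpoints of the new edge
  have hpuw : ∀ p : Fin n ⊕ Fin 2, p ≠ Sum.inl ⟨0, hn⟩ →
      (∀ x, (GnPrime n ⊔ SimpleGraph.fromEdgeSet {s(u,w)}).Adj p x → x = v') →
      p ≠ u ∧ p ≠ w := by
    intro p hpz0 hp
    constructor
    · rintro rfl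
      have hwv : w = v' := hp w (sup_edge_adj.mpr (Or.inr ⟨rfl, huw⟩))
      rw [hveq] at hwv
      exact hnadj (hwv ▸ (gnPrime_dominating hn p hpz0).symm)
    · rintro rfl
      have huv : u = v' := hp u (sup_edge_adj.mpr (Or.inr ⟨Sym2.eq_swap, Ne.symm huw⟩))
      rw [hveq] at huv
      exact hnadj (huv ▸ (gnPrime_dominating hn p hpz0))
  obtain ⟨h1u, h1w⟩ := hpuw p₁ hz1 hu1
  obtain ⟨h2u, h2w⟩ := hpuw p₂ hz2 hu2
  -- leaves in `GnPrime n`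
  have hg1 : ∀ x, (GnPrime n).Adj p₁ x → x = Sum.inl ⟨0, hn⟩ :=
    fun x hx => hveq ▸ hu1 x (hle _ _ hx)
  have hg2 : ∀ x, (GnPrime n).Adj p₂ x → x = Sum.inl ⟨0, hn⟩ :=
    fun x hx => hveq ▸ hu2 x (hle _ _ hx)
  -- classification of leaves
  have hclass : ∀ p : Fin n ⊕ Fin 2, p ≠ Sum.inl ⟨0, hn⟩ →
      (∀ x, (GnPrime n).Adj p x → x = Sum.inl ⟨0, hn⟩) →
      (p = Sum.inr 0 ∨ p = Sum.inr 1) ∨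
        (∃ i : Fin n, p = Sum.inl i ∧ ∀ k : Fin n, k = i ∨ k = ⟨0, hn⟩) := by
    intro p hp hleafp
    match p with
    | Sum.inr j =>
      exact Or.inl ((fin2_cases j).imp (congrArg Sum.inr) (congrArg Sum.inr))
    | Sum.inl i =>
      right
      refine ⟨i, rfl, ?_⟩
      intro k
      by_cases hk : k = i
      · exact Or.inl hk
      · right
        have h3 : (Sum.inl k : Fin n ⊕ Fin 2) = Sum.inl ⟨0, hn⟩ :=
          hleafp _ (gnPrime_adj_inl_inl.mpr (fun e => hk e.symm))
        exact Sum.inl.inj h3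
  -- main contradiction when one leaf is an `inl` vertex
  have main : ∀ pa pb : Fin n ⊕ Fin 2, pa ≠ pb →
      pa ≠ Sum.inl ⟨0, hn⟩ → pb ≠ Sum.inl ⟨0, hn⟩ →
      pa ≠ u → pa ≠ w → pb ≠ u → pb ≠ w →
      (∃ i : Fin n, pa = Sum.inl i ∧ ∀ k : Fin n, k = i ∨ k = ⟨0, hn⟩) → False := by
    rintro pa pb hab haz hbz hau haw hbu hbw ⟨i, rfl, hi⟩
    have hsmall : ∀ q : Fin n ⊕ Fin 2, q ≠ Sum.inl ⟨0, hn⟩ → q ≠ Sum.inl i →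
        q = Sum.inr 0 ∨ q = Sum.inr 1 := by
      intro q hq1 hq2
      match q with
      | Sum.inl k =>
        rcases hi k with rfl | hk0
        · exact absurd rfl hq2
        · exact absurd (congrArg Sum.inl hk0) hq1
      | Sum.inr j => exact (fin2_cases j).imp (congrArg Sum.inr) (congrArg Sum.inr)
    have hu' := hsmall u huz (fun e => hau e.symm)
    have hw' := hsmall w hwz (fun e => haw e.symm)
    have hb' := hsmall pb hbz (fun e => hab e.symm)
    rcases hu' with rfl | rfl <;> rcases hw' with rfl | rfl <;>
      rcases hb' with rfl | rfl <;>
      first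
        | exact huw rfl
        | exact hbu rfl
        | exact hbw rfl
  -- finish
  rcases hclass p₁ hz1 hg1 with h1 | h1
  · rcases hclass p₂ hz2 hg2 with h2 | h2
    · -- both leaves are pendant vertices
      have cover : ∀ j : Fin 2, (Sum.inr j : Fin n ⊕ Fin 2) = p₁ ∨ Sum.inr j = p₂ := by
        intro j
        rcases h1 with rfl | rfl <;> rcases h2 with rfl | rfl
        · exact absurd rfl hne
        · rcases fin2_cases j with rfl | rfl
          · exact Or.inl rfl
          · exact Or.inr rfl
        · rcases fin2_cases j with rfl | rfl
          · exact Or.inr rfl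
          · exact Or.inl rfl
        · exact absurd rfl hne
      have hu' : ∃ i : Fin n, u = Sum.inl i := by
        match u, h1u, h2u with
        | Sum.inl i, _, _ => exact ⟨i, rfl⟩
        | Sum.inr j, h1u', h2u' =>
          rcases cover j with h | h
          · exact absurd h.symm h1u'
          · exact absurd h.symm h2u'
      have hw' : ∃ i : Fin n, w = Sum.inl i := by
        match w, h1w, h2w with
        | Sum.inl i, _, _ => exact ⟨i, rfl⟩
        | Sum.inr j, h1w', h2w' =>
          rcases cover j with h | h
          · exact absurd h.symm h1w'
          · exact absurd h.symm h2w'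
      obtain ⟨i, rfl⟩ := hu'
      obtain ⟨i', rfl⟩ := hw'
      exact hnadj (gnPrime_adj_inl_inl.mpr (fun e => huw (by rw [e])))
    · exact main p₂ p₁ (Ne.symm hne) hz2 hz1 h2u h2w h1u h1w h2
  · exact main p₁ p₂ hne hz1 hz2 h1u h1w h2u h2w h1

end Gn
section Iso

variable {V W : Type*} {G : SimpleGraph V} {G' : SimpleGraph W}

lemma no_iso_of_iso (φ : G ≃g G') (h : ¬ ∃ x, ∀ y, ¬ G'.Adj x y) :
    ¬ ∃ x, ∀ y, ¬ G.Adj x y := by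
  rintro ⟨x, hx⟩
  refine h ⟨φ x, fun y hy => ?_⟩
  exact hx (φ.symm y) (φ.map_adj_iff.mp (by rwa [φ.apply_symm_apply]))

lemma twoLeaves_of_iso (φ : G ≃g G') (h : TwoLeaves G) : TwoLeaves G' := by
  obtain ⟨v, p₁, p₂, hne, h1, h2, u1, u2⟩ := h
  refine ⟨φ v, φ p₁, φ p₂, fun e => hne (φ.injective e),
    φ.map_adj_iff.mpr h1, φ.map_adj_iff.mpr h2, ?_, ?_⟩
  · intro x hx
    have hGadj : G.Adj p₁ (φ.symm x) := φ.map_adj_iff.mp (by rwa [φ.apply_symm_apply])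
    have := u1 _ hGadj
    rw [← φ.apply_symm_apply x, this]
  · intro x hx
    have hGadj : G.Adj p₂ (φ.symm x) := φ.map_adj_iff.mp (by rwa [φ.apply_symm_apply])
    have := u2 _ hGadj
    rw [← φ.apply_symm_apply x, this]

lemma iso_sup (φ : G ≃g G') (u w : V) :
    Nonempty ((G ⊔ SimpleGraph.fromEdgeSet {s(u,w)}) ≃g
      (G' ⊔ SimpleGraph.fromEdgeSet {s(φ u, φ w)})) := by
  refine ⟨⟨φ.toEquiv, ?_⟩⟩
  intro a b
  show (G' ⊔ SimpleGraph.fromEdgeSet {s(φ u, φ w)}).Adj (φ a) (φ b) ↔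
    (G ⊔ SimpleGraph.fromEdgeSet {s(u,w)}).Adj a b
  rw [sup_edge_adj, sup_edge_adj, φ.map_adj_iff]
  refine or_congr Iff.rfl (and_congr ?_ (not_congr φ.toEquiv.apply_eq_iff_eq))
  rw [Sym2.eq_iff, Sym2.eq_iff]
  constructor
  · rintro (⟨e1, e2⟩ | ⟨e1, e2⟩)
    · exact Or.inl ⟨φ.injective e1, φ.injective e2⟩
    · exact Or.inr ⟨φ.injective e1, φ.injective e2⟩
  · rintro (⟨rfl, rfl⟩ | ⟨rfl, rfl⟩)
    · exact Or.inl ⟨rfl, rfl⟩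
    · exact Or.inr ⟨rfl, rfl⟩

end Iso
section Structure

lemma structure_mp {V : Type*} [Fintype V] {G : SimpleGraph V}
    (htl : TwoLeaves G)
    (hcrit : ∀ u w : V, u ≠ w → ¬ G.Adj u w →
      ¬ TwoLeaves (G ⊔ SimpleGraph.fromEdgeSet {s(u,w)})) :
    ∃ n : ℕ, 1 ≤ n ∧ Nonempty (G ≃g GnPrime n) := by
  classical
  obtain ⟨v, p₁, p₂, hne, h1, h2, u1, u2⟩ := htl
  have hne' : p₂ ≠ p₁ := Ne.symm hne
  have hvp₁ : v ≠ p₁ := h1.ne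
  have hvp₂ : v ≠ p₂ := h2.ne
  have hadj1 : ∀ x, G.Adj p₁ x ↔ x = v := fun x => ⟨u1 x, fun e => e ▸ h1.symm⟩
  have hadj2 : ∀ x, G.Adj p₂ x ↔ x = v := fun x => ⟨u2 x, fun e => e ▸ h2.symm⟩
  -- everything outside the two pendant vertices forms a clique
  have hclique : ∀ a b : V, a ≠ p₁ → a ≠ p₂ → b ≠ p₁ → b ≠ p₂ → a ≠ b → G.Adj a b := by
    intro a b ha1 ha2 hb1 hb2 hab
    by_contra hnadj
    apply hcrit a b hab hnadj
    refine ⟨v, p₁, p₂, hne, sup_edge_adj.mpr (Or.inl h1), sup_edge_adj.mpr (Or.inl h2),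
      ?_, ?_⟩
    · intro x hx
      rcases sup_edge_adj.mp hx with hx | ⟨he, -⟩
      · exact u1 x hx
      · exfalso
        rcases Sym2.eq_iff.mp he with ⟨e1, -⟩ | ⟨e1, -⟩
        · exact ha1 e1.symm
        · exact hb1 e1.symm
    · intro x hx
      rcases sup_edge_adj.mp hx with hx | ⟨he, -⟩
      · exact u2 x hx
      · exfalso
        rcases Sym2.eq_iff.mp he with ⟨e1, -⟩ | ⟨e1, -⟩
        · exact ha2 e1.symm
        · exact hb2 e1.symm
  -- set of clique vertices
  set S : Set V := {p₁, p₂}ᶜ with hS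
  have hScmem : ∀ x, x ∈ Sᶜ ↔ x = p₁ ∨ x = p₂ := by intro x; simp [hS]
  have hSmem : ∀ x, x ∈ S ↔ x ≠ p₁ ∧ x ≠ p₂ := by
    intro x
    simp only [hS, Set.mem_compl_iff, Set.mem_insert_iff, Set.mem_singleton_iff]
    push_neg
    exact Iff.rfl
  have hvS : v ∈ S := (hSmem v).mpr ⟨hvp₁, hvp₂⟩
  have hp₁Sc : p₁ ∈ Sᶜ := (hScmem p₁).mpr (Or.inl rfl)
  have hp₂Sc : p₂ ∈ Sᶜ := (hScmem p₂).mpr (Or.inr rfl)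
  haveI : Fintype ↥S := Fintype.ofFinite _
  set n : ℕ := Fintype.card ↥S with hn
  have hn1 : 1 ≤ n := Fintype.card_pos_iff.mpr ⟨⟨v, hvS⟩⟩
  haveI : NeZero n := ⟨by omega⟩
  refine ⟨n, hn1, ?_⟩
  let e₀ : ↥S ≃ Fin n := Fintype.equivFin ↥S
  let e₁ : ↥S ≃ Fin n := e₀.trans (Equiv.swap (e₀ ⟨v, hvS⟩) 0)
  have he₁v : e₁ ⟨v, hvS⟩ = 0 := by simp [e₁, Equiv.swap_apply_left]
  have he₁zero : ∀ x : ↥S, e₁ x = 0 ↔ x.1 = v := by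
    intro x
    constructor
    · intro h
      have : x = ⟨v, hvS⟩ := e₁.injective (by rw [h, he₁v])
      exact congrArg Subtype.val this
    · intro h
      have : x = ⟨v, hvS⟩ := Subtype.ext h
      rw [this, he₁v]
  let e₂ : ↥(Sᶜ) ≃ Fin 2 :=
    { toFun := fun x => if x.1 = p₁ then 0 else 1
      invFun := fun j => if j = 0 then ⟨p₁, hp₁Sc⟩ else ⟨p₂, hp₂Sc⟩
      left_inv := by
        rintro ⟨x, hx⟩
        rcases (hScmem x).mp hx with rfl | rfl
        · simp
        · simp [hne']
      right_inv := by
        intro j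
        rcases fin2_cases j with rfl | rfl
        · simp
        · simp [hne'] }
  have he₂p₁ : e₂ ⟨p₁, hp₁Sc⟩ = 0 := by simp [e₂]
  have he₂p₂ : e₂ ⟨p₂, hp₂Sc⟩ = 1 := by simp [e₂, hne']
  let E : V ≃ (Fin n ⊕ Fin 2) := (Equiv.Set.sumCompl S).symm.trans (Equiv.sumCongr e₁ e₂)
  have hEmem : ∀ x (hx : x ∈ S), E x = Sum.inl (e₁ ⟨x, hx⟩) := by
    intro x hx
    simp [E, Equiv.Set.sumCompl_symm_apply_of_mem hx]
  have hEnmem : ∀ x (hx : x ∈ Sᶜ), E x = Sum.inr (e₂ ⟨x, hx⟩) := by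
    intro x hx
    simp [E, Equiv.Set.sumCompl_symm_apply_of_notMem hx]
  -- adjacency to a pendant vertex
  have hadjSc : ∀ a b, b ∈ Sᶜ → (G.Adj a b ↔ a = v) := by
    intro a b hb
    rcases (hScmem b).mp hb with rfl | rfl
    · rw [SimpleGraph.adj_comm]; exact hadj1 a
    · rw [SimpleGraph.adj_comm]; exact hadj2 a
  -- the one-step adjacency computation, mixed case
  have mixed : ∀ a b (ha : a ∈ S) (hb : b ∈ Sᶜ),
      ((GnPrime n).Adj (E a) (E b) ↔ G.Adj a b) := by
    intro a b ha hb
    have hval : ∀ i : Fin n, i.val = 0 ↔ i = 0 := by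
      intro i
      rw [Fin.ext_iff]
      simp
    rw [hEmem a ha, hEnmem b hb, gnPrime_adj_inl_inr, hadjSc a b hb, hval, he₁zero]
  refine ⟨⟨E, ?_⟩⟩
  intro a b
  show (GnPrime n).Adj (E a) (E b) ↔ G.Adj a b
  by_cases haS : a ∈ S
  · by_cases hbS : b ∈ S
    · rw [hEmem a haS, hEmem b hbS, gnPrime_adj_inl_inl]
      constructor
      · intro h
        have hab : a ≠ b := fun e => h (congrArg e₁ (Subtype.ext e))
        exact hclique a b ((hSmem a).mp haS).1 ((hSmem a).mp haS).2
          ((hSmem b).mp hbS).1 ((hSmem b).mp hbS).2 hab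
      · intro h he
        exact h.ne (congrArg Subtype.val (e₁.injective he))
    · exact mixed a b haS hbS
  · by_cases hbS : b ∈ S
    · exact ⟨fun h => ((mixed b a hbS haS).mp h.symm).symm,
        fun h => ((mixed b a hbS haS).mpr h.symm).symm⟩
    · -- both pendant vertices: no adjacency on either side
      have ha : a ∈ Sᶜ := haS
      have hb : b ∈ Sᶜ := hbS
      rw [hEnmem a ha, hEnmem b hb]
      constructor
      · intro h
        exact absurd h gnPrime_adj_inr_inr
      · intro h
        exfalso
        have heqv := (hadjSc a b hb).mp h
        rcases (hScmem a).mp ha with rfl | rfl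
        · exact hvp₁ heqv.symm
        · exact hvp₂ heqv.symm

end Structure
/-- A (finite) graph `G` is `2`-`γ'_SMB`-critical if and only if `G` is isomorphic to `G_n'`
for some `n ≥ 1`. -/
theorem two_gammaSMB'_critical_iff {V : Type*} [Fintype V] (G : SimpleGraph V) :
    (gammaSMB' G = 2 ∧ ∀ u v : V, u ≠ v → ¬ G.Adj u v →
        gammaSMB' G < gammaSMB' (G ⊔ SimpleGraph.fromEdgeSet {s(u, v)})) ↔
      ∃ n : ℕ, 1 ≤ n ∧ Nonempty (G ≃g GnPrime n) := by
  constructor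
  · rintro ⟨h2, hcrit⟩
    rcases gammaSMB'_eq_two.mp h2 with ⟨hns1, hs2⟩
    have hnoiso : ¬ ∃ x, ∀ y, ¬ G.Adj x y := fun h => hns1 (swin_one_iff.mpr h)
    have htl : TwoLeaves G := by
      rcases swin_two_iff.mp hs2 with h | h
      · exact absurd h hnoiso
      · exact h
    apply structure_mp htl
    intro u w huw hnadj htl'
    have hlt := hcrit u w huw hnadj
    rw [h2] at hlt
    exact (two_lt_gammaSMB'.mp hlt) (swin_two_iff.mpr (Or.inr htl'))
  · rintro ⟨n, hn1, ⟨φ⟩⟩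
    have hn : 0 < n := hn1
    have hnoiso : ¬ ∃ x, ∀ y, ¬ G.Adj x y := no_iso_of_iso φ (gnPrime_no_iso hn)
    have htl : TwoLeaves G := twoLeaves_of_iso φ.symm (gnPrime_twoLeaves hn)
    have h2 : gammaSMB' G = 2 := gammaSMB'_eq_two.mpr
      ⟨fun h => hnoiso (swin_one_iff.mp h), swin_two_iff.mpr (Or.inr htl)⟩
    refine ⟨h2, ?_⟩
    intro u w huw hnadj
    rw [h2]
    apply two_lt_gammaSMB'.mpr
    intro hs2
    rcases swin_two_iff.mp hs2 with h | h
    · obtain ⟨x, hx⟩ := h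
      exact hnoiso ⟨x, fun y hy => hx y (sup_edge_adj.mpr (Or.inl hy))⟩
    · obtain ⟨ψ⟩ := iso_sup φ u w
      exact gnPrime_crit hn (φ u) (φ w) (fun e => huw (φ.injective e))
        (fun hh => hnadj (φ.map_adj_iff.mp hh)) (twoLeaves_of_iso ψ h)
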